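/- Let S and A be nonempty finite sets, let τ ∈ ℝ^{S×A} satisfy τ(s,a) ≥ 0 and Σ_a τ(s,a) = 1 for every s, let ρ ∈ ℝ^S have ρ(s) ≥ 0 for all s, and set η(s,a) = ρ(s)·τ(s,a). Let b ∈ ℝ^{S×A}, c ∈ ℝ, and S₀ = {s ∈ S : b(s,a) ≠ 0 for some a ∈ A}. If Σ_{s,a} b(s,a)·τ(s,a) ≥ c, then Σ_{s∈S₀} Σ_a b(s,a)·η(s,a)·∏_{s'∈S₀∖{s}} (Σ_{a'} η(s',a')) − c·∏_{s'∈S₀} (Σ_{a'} η(s',a')) ≥ 0. Conversely, if additionally ρ(s) > 0 for all s ∈ S₀, then this polynomial inequality in η implies Σ_{s,a} b(s,a)·τ(s,a) ≥ c. -/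
import Mathlib


/-- Let `S, A` be nonempty finite sets, `τ` a policy, `ρ ≥ 0` state
weights and `η(s,a) = ρ(s)τ(s,a)`. Let `b ∈ ℝ^{S×A}`, `c ∈ ℝ` and
`S₀ = {s : b(s,a) ≠ 0 for some a}`. If `∑_{s,a} b(s,a)τ(s,a) ≥ c` then
`∑_{s∈S₀} ∑_a b(s,a)η(s,a) ∏_{s'∈S₀∖{s}} (∑_{a'} η(s',a')) - c ∏_{s'∈S₀} (∑_{a'} η(s',a')) ≥ 0`;
conversely, if additionally `ρ(s) > 0` for all `s ∈ S₀`, the polynomial inequality implies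
the linear one. -/
theorem stmt16 {S A : Type*} [Fintype S] [Fintype A] [DecidableEq S]
    [Nonempty S] [Nonempty A]
    (τ : S → A → ℝ) (hτpos : ∀ s a, 0 ≤ τ s a) (hτsum : ∀ s, ∑ a, τ s a = 1)
    (ρ : S → ℝ) (hρ : ∀ s, 0 ≤ ρ s)
    (η : S → A → ℝ) (hη : ∀ s a, η s a = ρ s * τ s a)
    (b : S → A → ℝ) (c : ℝ) :
    let S₀ : Finset S := Finset.univ.filter (fun s => ∃ a, b s a ≠ 0)
    ((∑ s, ∑ a, b s a * τ s a ≥ c) →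
      (∑ s ∈ S₀, ∑ a, b s a * η s a * ∏ s' ∈ S₀.erase s, (∑ a', η s' a'))
        - c * ∏ s' ∈ S₀, (∑ a', η s' a') ≥ 0) ∧
    ((∀ s ∈ S₀, 0 < ρ s) →
      ((∑ s ∈ S₀, ∑ a, b s a * η s a * ∏ s' ∈ S₀.erase s, (∑ a', η s' a'))
        - c * ∏ s' ∈ S₀, (∑ a', η s' a') ≥ 0) →
      ∑ s, ∑ a, b s a * τ s a ≥ c) := by

  intro S₀
  have hrow : ∀ s', (∑ a', η s' a') = ρ s' := fun s' => by
    simp [hη, ← Finset.mul_sum, hτsum]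
  set P := ∏ s' ∈ S₀, ρ s' with hP
  have hPnn : 0 ≤ P := Finset.prod_nonneg fun s _ => hρ s
  have htot : ∑ s, ∑ a, b s a * τ s a = ∑ s ∈ S₀, ∑ a, b s a * τ s a := by
    symm
    apply Finset.sum_subset (Finset.filter_subset _ _)
    intro s _ hs
    simp only [S₀, Finset.mem_filter, Finset.mem_univ, true_and, not_exists, not_not] at hs
    exact Finset.sum_eq_zero fun a _ => by rw [hs a]; ring
  have hkey : (∑ s ∈ S₀, ∑ a, b s a * η s a * ∏ s' ∈ S₀.erase s, (∑ a', η s' a'))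
      - c * ∏ s' ∈ S₀, (∑ a', η s' a')
      = ((∑ s, ∑ a, b s a * τ s a) - c) * P := by
    have h1 : ∀ s ∈ S₀,
        (∑ a, b s a * η s a * ∏ s' ∈ S₀.erase s, (∑ a', η s' a'))
        = (∑ a, b s a * τ s a) * P := by
      intro s hs
      have hPe : P = (∏ s' ∈ S₀.erase s, ρ s') * ρ s :=
        (Finset.prod_erase_mul S₀ ρ hs).symm
      rw [hPe, Finset.sum_mul]
      refine Finset.sum_congr rfl fun a _ => ?_
      simp only [hrow]; simp only [hη]
      ring
    rw [Finset.sum_congr rfl h1, ← Finset.sum_mul, htot]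
    simp only [hrow]
    ring
  constructor
  · intro h
    rw [ge_iff_le, ← sub_nonneg] at h ⊢
    rw [hkey]
    simpa using mul_nonneg (by linarith) hPnn
  · intro hpos hineq
    have hPpos : 0 < P := Finset.prod_pos hpos
    rw [hkey] at hineq
    by_contra hc
    push_neg at hc
    nlinarith
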